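/- Let g : 𝒲 → ℝ be a regularizer with |g(w₁) − g(w₂)| ≤ B for all w₁, w₂ ∈ 𝒲 and some B > 0, let λ > 0, and let W_RERM be a minimizer of w ↦ (1/n)Σ_{i=1}^n ℓ(w, Zᵢ) + (λ/n) g(w). Assume W = W_RERM satisfies the expected (η, c)-central condition, i.e. log E_{P_W ⊗ μ}[exp(−η r(W', Z'))] ≤ −c η E_{P_W ⊗ μ}[r(W', Z')] with η > 0, 0 < c ≤ 1. Then for every η' ∈ (0, η]: E[ℛ(W_RERM)] ≤ (1/c) · E[ℛ̂_reg(W_RERM, Sₙ)] + λB/(c n) + (1/(c η' n)) Σ_{i=1}^n I(W_RERM; Zᵢ). -/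

import Mathlib

open MeasureTheory ProbabilityTheory

/-- Real-valued Kullback–Leibler divergence `D(P‖Q) = ∫ log (dP/dQ) dP`. -/
noncomputable def klDivR {α : Type*} [MeasurableSpace α] (P Q : Measure α) : ℝ :=
  ∫ x, llr P Q x ∂P

section Aux
open Real
open scoped ENNReal
variable {α : Type*} [MeasurableSpace α]

lemma young_aux {a b : ℝ} (ha : 0 ≤ a) (hb : 0 ≤ b) :
    b * a ≤ Real.exp a + b * |Real.log b| := by
  rcases eq_or_lt_of_le hb with rfl | hb'
  · simpa using (Real.exp_pos a).le
  · have h1 : (a - Real.log b) + 1 ≤ Real.exp (a - Real.log b) := Real.add_one_le_exp _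
    have h2 : Real.exp (a - Real.log b) = Real.exp a / b := by
      rw [Real.exp_sub, Real.exp_log hb']
    have h3 := mul_le_mul_of_nonneg_left h1 hb'.le
    rw [h2, mul_div_cancel₀ _ hb'.ne'] at h3
    have h4 : Real.log b ≤ |Real.log b| := le_abs_self _
    nlinarith

lemma kl_nonneg' (J Q : Measure α) [IsProbabilityMeasure J] [IsProbabilityMeasure Q]
    (hJQ : J ≪ Q) (hi : Integrable (llr J Q) J) : 0 ≤ ∫ x, llr J Q x ∂J := by
  set φ : α → ℝ := fun x => ((J.rnDeriv Q x)⁻¹).toReal with hφ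
  have hmeas : AEMeasurable (fun x => (J.rnDeriv Q x)⁻¹) J :=
    ((Measure.measurable_rnDeriv J Q).inv).aemeasurable
  have hlin : ∫⁻ x, (J.rnDeriv Q x)⁻¹ ∂J ≤ 1 := by
    rw [← lintegral_rnDeriv_mul hJQ (f := fun x => (J.rnDeriv Q x)⁻¹)
      ((Measure.measurable_rnDeriv J Q).inv).aemeasurable]
    calc ∫⁻ x, J.rnDeriv Q x * (J.rnDeriv Q x)⁻¹ ∂Q ≤ ∫⁻ _, 1 ∂Q := by
          refine lintegral_mono fun x => ?_
          rcases eq_or_ne (J.rnDeriv Q x) 0 with h | h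
          · simp [h]
          rcases eq_or_ne (J.rnDeriv Q x) ⊤ with h' | h'
          · simp [h']
          · rw [ENNReal.mul_inv_cancel h h']
      _ = 1 := by simp
  have hφint : Integrable φ J := by
    refine integrable_toReal_of_lintegral_ne_top hmeas (ne_top_of_le_ne_top ?_ hlin)
    simp
  have hae : ∀ᵐ x ∂J, (J.rnDeriv Q x)⁻¹ < ⊤ := by
    filter_upwards [Measure.rnDeriv_pos hJQ] with x hx
    simp [ENNReal.inv_lt_top, hx]
  have hφval : ∫ x, φ x ∂J ≤ 1 := by
    rw [hφ, integral_toReal hmeas hae]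
    calc (∫⁻ x, (J.rnDeriv Q x)⁻¹ ∂J).toReal ≤ (1 : ℝ≥0∞).toReal :=
          ENNReal.toReal_mono (by simp) hlin
      _ = 1 := by simp
  have hptwise : ∀ᵐ x ∂J, -llr J Q x ≤ φ x - 1 := by
    filter_upwards [Measure.rnDeriv_pos hJQ, hJQ.ae_le (Measure.rnDeriv_lt_top J Q)]
      with x hx hx'
    have hρ : 0 < (J.rnDeriv Q x).toReal := ENNReal.toReal_pos hx.ne' hx'.ne
    have hφx : φ x = ((J.rnDeriv Q x).toReal)⁻¹ := by
      simp only [hφ, ENNReal.toReal_inv]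
    rw [llr_def, hφx, ← Real.log_inv]
    exact Real.log_le_sub_one_of_pos (by positivity)
  have hmono : ∫ x, -llr J Q x ∂J ≤ ∫ x, (φ x - 1) ∂J :=
    integral_mono_ae hi.neg (hφint.sub (integrable_const 1)) hptwise
  rw [integral_neg, integral_sub hφint (integrable_const 1)] at hmono
  simp only [integral_const, measure_univ, ENNReal.toReal_one, probReal_univ, mul_one, smul_eq_mul, one_mul] at hmono
  linarith

/-- Donsker–Varadhan inequality. -/
lemma dv_ineq (J Q : Measure α) [IsProbabilityMeasure J] [IsProbabilityMeasure Q]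
    (hJQ : J ≪ Q) (f : α → ℝ) (hfJ : Integrable f J)
    (hefQ : Integrable (fun x => Real.exp (f x)) Q)
    (hl : Integrable (llr J Q) J) :
    ∫ x, f x ∂J ≤ ∫ x, llr J Q x ∂J + Real.log (∫ x, Real.exp (f x) ∂Q) := by
  have hQ' : IsProbabilityMeasure (Q.tilted f) := isProbabilityMeasure_tilted hefQ
  have hJQ' : J ≪ Q.tilted f := hJQ.trans (absolutelyContinuous_tilted hefQ)
  have hint : Integrable (llr J (Q.tilted f)) J :=
    integrable_llr_tilted_right hJQ hfJ hl hefQ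
  have h0 := kl_nonneg' J (Q.tilted f) hJQ' hint
  rw [integral_llr_tilted_right hJQ hfJ hefQ hl] at h0
  linarith

/-- Integrability of a nonnegative function under `J` from an exponential moment under `Q`
and integrability of the log-likelihood ratio. -/
lemma integrable_of_expmoment (J Q : Measure α) [IsProbabilityMeasure J] [IsProbabilityMeasure Q]
    (hJQ : J ≪ Q) (f : α → ℝ) (hf : Measurable f) (h0 : ∀ x, 0 ≤ f x)
    (hefQ : Integrable (fun x => Real.exp (f x)) Q)
    (hl : Integrable (llr J Q) J) : Integrable f J := by
  set ρ : α → ℝ := fun x => (J.rnDeriv Q x).toReal with hρ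
  have hsmul : Integrable (fun x => ρ x • llr J Q x) Q :=
    (integrable_rnDeriv_smul_iff hJQ).2 hl
  set g : α → ℝ := fun x => Real.exp (f x) + ρ x * |llr J Q x| with hg
  have hgint : Integrable g Q := by
    refine hefQ.add ?_
    have habs := hsmul.abs
    refine habs.congr (Filter.Eventually.of_forall fun x => ?_)
    simp only [smul_eq_mul, abs_mul, abs_of_nonneg (ENNReal.toReal_nonneg : (0:ℝ) ≤ ρ x)]
    rw [abs_of_nonneg (show (0:ℝ) ≤ ρ x from ENNReal.toReal_nonneg)]
  have hgnn : 0 ≤ᵐ[Q] g := Filter.Eventually.of_forall fun x => by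
    have h1 : 0 ≤ ρ x * |llr J Q x| := mul_nonneg ENNReal.toReal_nonneg (abs_nonneg _)
    have h2 := (Real.exp_pos (f x)).le
    simp only [hg]; positivity
  have hgtop : ∫⁻ x, ENNReal.ofReal (g x) ∂Q ≠ ⊤ := by
    rw [← ofReal_integral_eq_lintegral_ofReal hgint hgnn]
    exact ENNReal.ofReal_ne_top
  have hkey : ∫⁻ x, ENNReal.ofReal (f x) ∂J ≠ ⊤ := by
    rw [← lintegral_rnDeriv_mul hJQ hf.ennreal_ofReal.aemeasurable]
    refine ne_top_of_le_ne_top hgtop (le_trans (lintegral_mono_ae ?_) le_rfl)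
    filter_upwards [Measure.rnDeriv_lt_top J Q] with x hx
    have h1 : J.rnDeriv Q x = ENNReal.ofReal (ρ x) := by
      rw [hρ, ENNReal.ofReal_toReal hx.ne]
    rw [h1, ← ENNReal.ofReal_mul ENNReal.toReal_nonneg]
    exact ENNReal.ofReal_le_ofReal (young_aux (h0 x) ENNReal.toReal_nonneg)
  have := integrable_toReal_of_lintegral_ne_top hf.ennreal_ofReal.aemeasurable hkey
  refine this.congr (Filter.Eventually.of_forall fun x => ?_)
  simp [ENNReal.toReal_ofReal (h0 x)]

/-- Lyapunov: `log E[exp (θ h)] ≤ θ log E[exp h]` for `0 < θ ≤ 1`. -/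
lemma log_integral_exp_smul_le (Q : Measure α) [IsProbabilityMeasure Q]
    (h : α → ℝ) (θ : ℝ) (hθ0 : 0 < θ) (hθ1 : θ ≤ 1)
    (h1 : Integrable (fun x => Real.exp (h x)) Q)
    (h2 : Integrable (fun x => Real.exp (θ * h x)) Q) :
    Real.log (∫ x, Real.exp (θ * h x) ∂Q) ≤ θ * Real.log (∫ x, Real.exp (h x) ∂Q) := by
  have hrw : ∀ x, Real.exp (θ * h x) = (Real.exp (h x)) ^ θ := by
    intro x; rw [mul_comm, Real.exp_mul]
  have hconc : ConcaveOn ℝ (Set.Ici 0) (fun t : ℝ => t ^ θ) :=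
    Real.concaveOn_rpow hθ0.le hθ1
  have hcont : ContinuousOn (fun t : ℝ => t ^ θ) (Set.Ici 0) := fun x _ =>
    (Real.continuousAt_rpow_const x θ (Or.inr hθ0.le)).continuousWithinAt
  have hjensen := hconc.le_map_integral hcont isClosed_Ici
    (Filter.Eventually.of_forall fun x => Set.mem_Ici.2 (Real.exp_pos (h x)).le) h1
    (by
      refine h2.congr (Filter.Eventually.of_forall fun x => ?_)
      simp [Function.comp, hrw x])
  have heq : ∫ x, Real.exp (θ * h x) ∂Q = ∫ x, (Real.exp (h x)) ^ θ ∂Q :=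
    integral_congr_ae (Filter.Eventually.of_forall fun x => hrw x)
  rw [heq]
  calc Real.log (∫ x, (Real.exp (h x)) ^ θ ∂Q)
      ≤ Real.log ((∫ x, Real.exp (h x) ∂Q) ^ θ) := by
        refine Real.log_le_log ?_ hjensen
        have hp : (0:ℝ) < ∫ x, Real.exp (θ * h x) ∂Q := integral_exp_pos h2
        rwa [heq] at hp
    _ = θ * Real.log (∫ x, Real.exp (h x) ∂Q) := Real.log_rpow (integral_exp_pos h1) θ
end Aux

/-- **Lemma 1 (excess risk bound for regularized ERM).** -/
theorem rerm_excess_risk_bound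
    {Ω 𝒲 𝒵 : Type*} [MeasurableSpace Ω] [MeasurableSpace 𝒲] [MeasurableSpace 𝒵]
    (P : Measure Ω) [IsProbabilityMeasure P]
    (μ : Measure 𝒵) [IsProbabilityMeasure μ]
    (ℓ : 𝒲 → 𝒵 → ℝ) (hℓ : Measurable (Function.uncurry ℓ))
    (n : ℕ) (hn : 0 < n)
    (Z : Fin n → Ω → 𝒵) (hZmeas : ∀ i, Measurable (Z i))
    (hZlaw : ∀ i, P.map (Z i) = μ)
    (hindep : iIndepFun Z P)
    (wstar : 𝒲) (hwstar : ∀ w, ∫ z, ℓ wstar z ∂μ ≤ ∫ z, ℓ w z ∂μ)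
    (r : 𝒲 → 𝒵 → ℝ) (hr : r = fun w z => ℓ w z - ℓ wstar z)
    -- regularizer with bounded oscillation and coefficient `λ`
    (g : 𝒲 → ℝ) (B : ℝ) (hB : 0 < B) (hg : ∀ w₁ w₂, |g w₁ - g w₂| ≤ B)
    (lam : ℝ) (hlam : 0 < lam)
    -- `W` is the regularized empirical risk minimizer
    (W : Ω → 𝒲) (hW : Measurable W)
    (hRERM : ∀ ω, ∀ w,
      (n : ℝ)⁻¹ * ∑ i, ℓ (W ω) (Z i ω) + (lam / n) * g (W ω)
        ≤ (n : ℝ)⁻¹ * ∑ i, ℓ w (Z i ω) + (lam / n) * g w)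
    (η c : ℝ) (hη : 0 < η) (hc : 0 < c) (hc1 : c ≤ 1)
    -- all expectations appearing are finite
    (hrInt : Integrable (fun p : 𝒲 × 𝒵 => r p.1 p.2) ((P.map W).prod μ))
    (hexpInt : ∀ η' : ℝ, 0 < η' → η' ≤ η →
      Integrable (fun p : 𝒲 × 𝒵 => Real.exp (-η' * r p.1 p.2)) ((P.map W).prod μ))
    (hRiskInt : Integrable (fun ω => ∫ z, r (W ω) z ∂μ) P)
    (hEmpRegInt : Integrable (fun ω =>
      (n : ℝ)⁻¹ * ∑ i, r (W ω) (Z i ω) + (lam / n) * (g (W ω) - g wstar)) P)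
    (hac : ∀ i, P.map (fun ω => (W ω, Z i ω)) ≪ (P.map W).prod μ)
    (hllr : ∀ i, Integrable (llr (P.map (fun ω => (W ω, Z i ω))) ((P.map W).prod μ))
        (P.map (fun ω => (W ω, Z i ω))))
    -- expected `(η, c)`-central condition for the RERM hypothesis
    (hcentral : Real.log (∫ p, Real.exp (-η * r p.1 p.2) ∂((P.map W).prod μ))
      ≤ -c * η * ∫ p, r p.1 p.2 ∂((P.map W).prod μ)) :
    ∀ η' : ℝ, 0 < η' → η' ≤ η →
    ∫ ω, (∫ z, r (W ω) z ∂μ) ∂P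
      ≤ (1 / c) * (∫ ω, ((n : ℝ)⁻¹ * ∑ i, r (W ω) (Z i ω)
            + (lam / n) * (g (W ω) - g wstar)) ∂P)
        + lam * B / (c * n)
        + (1 / (c * η' * n)) * ∑ i,
            klDivR (P.map (fun ω => (W ω, Z i ω))) ((P.map W).prod μ) := by
  intro η' hη'0 hη'η
  have hWaem : AEMeasurable W P := hW.aemeasurable
  haveI hPW : IsProbabilityMeasure (P.map W) := Measure.isProbabilityMeasure_map hWaem
  set Q : Measure (𝒲 × 𝒵) := (P.map W).prod μ with hQdef
  haveI hQprob : IsProbabilityMeasure Q := by rw [hQdef]; infer_instance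
  have hn' : (0:ℝ) < n := by exact_mod_cast hn
  have hnne : (n:ℝ) ≠ 0 := hn'.ne'
  -- measurability of r
  have hrm : Measurable (fun p : 𝒲 × 𝒵 => r p.1 p.2) := by
    rw [hr]
    exact hℓ.sub (hℓ.comp (measurable_const.prodMk measurable_snd))
  set J : Fin n → Measure (𝒲 × 𝒵) := fun i => P.map (fun ω => (W ω, Z i ω)) with hJdef
  have hJmeas : ∀ i, Measurable (fun ω => (W ω, Z i ω)) := fun i => hW.prodMk (hZmeas i)
  have hJprob : ∀ i, IsProbabilityMeasure (J i) := fun i =>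
    Measure.isProbabilityMeasure_map (hJmeas i).aemeasurable
  set E : ℝ := ∫ p, r p.1 p.2 ∂Q with hEdef
  -- Step A : LHS = E
  have hFmeas : StronglyMeasurable (fun w => ∫ z, r w z ∂μ) :=
    hrm.stronglyMeasurable.integral_prod_right'
  have hstepA : ∫ ω, (∫ z, r (W ω) z ∂μ) ∂P = E := by
    rw [hEdef, hQdef, integral_prod _ hrInt,
      integral_map hWaem hFmeas.aestronglyMeasurable]
  -- integrability of the empirical sum
  set S : Ω → ℝ := fun ω => ∑ i, r (W ω) (Z i ω) with hSdef
  have hSmeas : Measurable S := by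
    apply Finset.measurable_sum
    intro i _
    exact hrm.comp (hJmeas i)
  have hSint : Integrable S P := by
    refine Integrable.mono'
      ((hEmpRegInt.norm.const_mul (n:ℝ)).add (integrable_const (lam * B)))
      hSmeas.aestronglyMeasurable ?_
    filter_upwards with ω
    have hGb : |g (W ω) - g wstar| ≤ B := hg _ _
    have h1 : S ω = (n:ℝ) * ((n:ℝ)⁻¹ * S ω + (lam/n) * (g (W ω) - g wstar))
        - lam * (g (W ω) - g wstar) := by
      field_simp
      ring
    rw [Real.norm_eq_abs, h1]
    calc |(n:ℝ) * ((n:ℝ)⁻¹ * S ω + (lam/n) * (g (W ω) - g wstar))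
          - lam * (g (W ω) - g wstar)|
        ≤ |(n:ℝ) * ((n:ℝ)⁻¹ * S ω + (lam/n) * (g (W ω) - g wstar))|
          + |lam * (g (W ω) - g wstar)| := abs_sub _ _
      _ ≤ (n:ℝ) * ‖(n:ℝ)⁻¹ * S ω + (lam/n) * (g (W ω) - g wstar)‖ + lam * B := by
          rw [abs_mul, abs_mul, abs_of_nonneg hn'.le, abs_of_nonneg hlam.le,
            Real.norm_eq_abs]
          gcongr
  -- per-i integrability via exponential moments
  have hmint : ∀ i, Integrable (fun ω => max (-(r (W ω) (Z i ω))) 0) P := by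
    intro i
    haveI := hJprob i
    have hmi : Measurable (fun p : 𝒲 × 𝒵 => η' * max (-(r p.1 p.2)) 0) :=
      (hrm.neg.max measurable_const).const_mul η'
    have hexp : Integrable (fun p : 𝒲 × 𝒵 => Real.exp (η' * max (-(r p.1 p.2)) 0)) Q := by
      refine Integrable.mono' ((hexpInt η' hη'0 hη'η).add (integrable_const 1))
        (hmi.exp.aestronglyMeasurable) ?_
      filter_upwards with p
      simp only [Pi.add_apply]
      rw [Real.norm_eq_abs, abs_of_pos (Real.exp_pos _)]
      rcases le_total 0 (r p.1 p.2) with h | h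
      · rw [max_eq_right (by linarith)]
        have := Real.exp_pos (-η' * r p.1 p.2)
        simp only [mul_zero, Real.exp_zero]
        linarith
      · rw [max_eq_left (by linarith)]
        have h2 : η' * -(r p.1 p.2) = -η' * r p.1 p.2 := by ring
        rw [h2]
        linarith
    have hint : Integrable (fun p : 𝒲 × 𝒵 => η' * max (-(r p.1 p.2)) 0) (J i) :=
      integrable_of_expmoment (J i) Q (hac i) _ hmi
        (fun p => mul_nonneg hη'0.le (le_max_right (-(r p.1 p.2)) 0)) hexp (hllr i)
    have hint2 : Integrable (fun p : 𝒲 × 𝒵 => max (-(r p.1 p.2)) 0) (J i) := by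
      have h' := hint.const_mul η'⁻¹
      refine h'.congr (Filter.Eventually.of_forall fun p => ?_)
      show η'⁻¹ * (η' * max (-(r p.1 p.2)) 0) = max (-(r p.1 p.2)) 0
      rw [← mul_assoc, inv_mul_cancel₀ hη'0.ne', one_mul]
    have := (integrable_map_measure
      ((hrm.neg.max measurable_const).aestronglyMeasurable)
      (hJmeas i).aemeasurable).1 hint2
    exact this
  have hrint : ∀ i, Integrable (fun ω => r (W ω) (Z i ω)) P := by
    intro i
    have hqsum : Integrable (fun ω => ∑ j, max (r (W ω) (Z j ω)) 0) P := by
      have hfe : (fun ω => ∑ j, max (r (W ω) (Z j ω)) 0)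
          = fun ω => S ω + ∑ j, max (-(r (W ω) (Z j ω))) 0 := by
        funext ω
        rw [hSdef]
        simp only
        rw [← Finset.sum_add_distrib]
        refine Finset.sum_congr rfl fun j _ => ?_
        have := max_zero_sub_eq_self (r (W ω) (Z j ω))
        linarith
      rw [hfe]
      exact hSint.add (integrable_finset_sum _ fun j _ => hmint j)
    have hqi : Integrable (fun ω => max (r (W ω) (Z i ω)) 0) P := by
      refine Integrable.mono' hqsum
        ((hrm.comp (hJmeas i)).max measurable_const).aestronglyMeasurable ?_
      filter_upwards with ω
      rw [Real.norm_eq_abs, abs_of_nonneg (le_max_right _ _)]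
      exact Finset.single_le_sum (f := fun j => max (r (W ω) (Z j ω)) 0)
        (fun j _ => le_max_right _ _) (Finset.mem_univ i)
    have hfe2 : (fun ω => r (W ω) (Z i ω))
        = fun ω => max (r (W ω) (Z i ω)) 0 - max (-(r (W ω) (Z i ω))) 0 := by
      funext ω
      rw [max_zero_sub_eq_self]
    rw [hfe2]
    exact hqi.sub (hmint i)
  have hrJ : ∀ i, Integrable (fun p : 𝒲 × 𝒵 => r p.1 p.2) (J i) := by
    intro i
    exact (integrable_map_measure hrm.aestronglyMeasurable (hJmeas i).aemeasurable).2
      (hrint i)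
  have hEi : ∀ i, ∫ p, r p.1 p.2 ∂(J i) = ∫ ω, r (W ω) (Z i ω) ∂P := fun i =>
    integral_map (hJmeas i).aemeasurable hrm.aestronglyMeasurable
  -- the log moment bound
  have hlog : Real.log (∫ p, Real.exp (-η' * r p.1 p.2) ∂Q) ≤ -(c * η' * E) := by
    set θ : ℝ := η' / η with hθdef
    have hθ0 : 0 < θ := div_pos hη'0 hη
    have hθ1 : θ ≤ 1 := (div_le_one hη).2 hη'η
    have hfun : ∀ t : ℝ, θ * (-η * t) = -η' * t := by
      intro t
      rw [hθdef]
      field_simp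
    have h2' : Integrable (fun p : 𝒲 × 𝒵 => Real.exp (θ * (-η * r p.1 p.2))) Q := by
      refine (hexpInt η' hη'0 hη'η).congr (Filter.Eventually.of_forall fun p => ?_)
      show Real.exp (-η' * r p.1 p.2) = Real.exp (θ * (-η * r p.1 p.2))
      rw [hfun]
    have hL := log_integral_exp_smul_le Q (fun p => -η * r p.1 p.2) θ hθ0 hθ1
      (hexpInt η hη le_rfl) h2'
    have heq : ∫ p, Real.exp (θ * (-η * r p.1 p.2)) ∂Q
        = ∫ p, Real.exp (-η' * r p.1 p.2) ∂Q :=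
      integral_congr_ae (Filter.Eventually.of_forall fun p => by
        show Real.exp (θ * (-η * r p.1 p.2)) = Real.exp (-η' * r p.1 p.2)
        rw [hfun])
    rw [heq] at hL
    refine hL.trans ?_
    have := mul_le_mul_of_nonneg_left hcentral hθ0.le
    refine this.trans (le_of_eq ?_)
    rw [hθdef]
    field_simp
  -- per-i key inequality
  have hkey : ∀ i, c * η' * E ≤ klDivR (J i) Q + η' * ∫ ω, r (W ω) (Z i ω) ∂P := by
    intro i
    haveI := hJprob i
    have hdv := dv_ineq (J i) Q (hac i) (fun p => -η' * r p.1 p.2)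
      ((hrJ i).const_mul (-η')) (hexpInt η' hη'0 hη'η) (hllr i)
    rw [integral_const_mul, hEi i] at hdv
    have hKL : klDivR (J i) Q = ∫ p, llr (J i) Q p ∂(J i) := rfl
    rw [hKL]
    linarith
  -- sum over i
  have hIS : ∫ ω, S ω ∂P = ∑ i, ∫ ω, r (W ω) (Z i ω) ∂P := by
    rw [hSdef]
    exact integral_finset_sum _ fun i _ => hrint i
  have hsum : (n:ℝ) * (c * η' * E) ≤ (∑ i, klDivR (J i) Q) + η' * ∫ ω, S ω ∂P := by
    calc (n:ℝ) * (c * η' * E) = ∑ _i : Fin n, (c * η' * E) := by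
          rw [Finset.sum_const, Finset.card_univ, Fintype.card_fin, nsmul_eq_mul]
      _ ≤ ∑ i, (klDivR (J i) Q + η' * ∫ ω, r (W ω) (Z i ω) ∂P) :=
          Finset.sum_le_sum fun i _ => hkey i
      _ = (∑ i, klDivR (J i) Q) + η' * ∫ ω, S ω ∂P := by
          rw [Finset.sum_add_distrib, ← Finset.mul_sum, hIS]
  -- decomposition of the regularized empirical risk
  have hGint : Integrable (fun ω => g (W ω) - g wstar) P := by
    have hfe : (fun ω => g (W ω) - g wstar)
        = fun ω => ((n:ℝ)/lam) * (((n:ℝ)⁻¹ * S ω + (lam/n) * (g (W ω) - g wstar))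
            - (n:ℝ)⁻¹ * S ω) := by
      funext ω
      field_simp
      ring
    rw [hfe]
    exact (hEmpRegInt.sub (hSint.const_mul (n:ℝ)⁻¹)).const_mul _
  have hIH : ∫ ω, ((n:ℝ)⁻¹ * S ω + (lam/n) * (g (W ω) - g wstar)) ∂P
      = (n:ℝ)⁻¹ * ∫ ω, S ω ∂P + (lam/n) * ∫ ω, (g (W ω) - g wstar) ∂P := by
    rw [integral_add (hSint.const_mul _) (hGint.const_mul _), integral_const_mul,
      integral_const_mul]
  have hGlb : -B ≤ ∫ ω, (g (W ω) - g wstar) ∂P := by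
    have hm := integral_mono_ae (integrable_const (-B)) hGint
      (Filter.Eventually.of_forall fun ω => by
        show -B ≤ g (W ω) - g wstar
        have h' := abs_le.1 (hg (W ω) wstar)
        linarith [h'.1])
    simpa using hm
  -- final algebra
  rw [hstepA]
  set K : ℝ := ∑ i, klDivR (J i) Q with hKdef
  set IS : ℝ := ∫ ω, S ω ∂P with hISdef
  set IG : ℝ := ∫ ω, (g (W ω) - g wstar) ∂P with hIGdef
  rw [hIH]
  have hpos1 : (0:ℝ) < c * η' * n := by positivity
  have h1 : E ≤ (1/(c*η'*n)) * (K + η' * IS) := by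
    rw [one_div, inv_mul_eq_div, le_div_iff₀ hpos1]
    have he : E * (c * η' * (n:ℝ)) = (n:ℝ) * (c * η' * E) := by ring
    linarith [hsum]
  have h2 : (1/(c*η'*n)) * (K + η' * IS) = (1/(c*η'*n))*K + (1/(c*n))*IS := by
    field_simp
  have h3 : (1/(c*n))*IS ≤ (1/c) * ((n:ℝ)⁻¹ * IS + (lam/n) * IG) + lam * B / (c*n) := by
    have hd : (1/c) * ((n:ℝ)⁻¹ * IS + (lam/n) * IG) + lam * B / (c*n) - (1/(c*n))*IS
        = (lam/(c*n)) * (IG + B) := by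
      field_simp
      ring
    have hge : 0 ≤ (lam/(c*n)) * (IG + B) :=
      mul_nonneg (by positivity) (by linarith)
    linarith
  linarith [h1, h2.le, h2.ge, h3]
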